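/- Let 𝔤 be a nonabelian nilpotent Lie algebra with inner product G satisfying the nilsoliton equation δ(Rc_G + (c/2)·Id) = 0 for some c ∈ ℝ. Then c = −2|Ric_G|²/R_G; in particular c > 0. -/

import Mathlib

open Matrix

namespace RFN

variable {n : ℕ}

/-- Bracket determined by structure constants: `[e i, e j] = ∑ k, c i j k • e k`. -/
def bra (c : Fin n → Fin n → Fin n → ℝ) (x y : Fin n → ℝ) : Fin n → ℝ :=
  fun k => ∑ i, ∑ j, x i * y j * c i j k

/-- `c` is a family of structure constants of a Lie algebra. -/
def IsLieSC (c : Fin n → Fin n → Fin n → ℝ) : Prop :=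
  (∀ i j k, c i j k = - c j i k) ∧
  ∀ x y z, bra c (bra c x y) z + bra c (bra c y z) x + bra c (bra c z x) y = 0

def adIter (c : Fin n → Fin n → Fin n → ℝ) (v : ℕ → Fin n → ℝ) :
    ℕ → (Fin n → ℝ) → (Fin n → ℝ)
  | 0, x => x
  | m + 1, x => bra c (v m) (adIter c v m x)

/-- Nilpotency of the Lie algebra with structure constants `c`. -/
def IsNilpotentSC (c : Fin n → Fin n → Fin n → ℝ) : Prop :=
  ∃ N : ℕ, ∀ v x, adIter c v N x = 0

/-- Inner product of vectors with respect to the metric matrix `G`. -/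
def gdot (G : Matrix (Fin n) (Fin n) ℝ) (x y : Fin n → ℝ) : ℝ :=
  ∑ i, ∑ j, x i * G i j * y j

/-- Components of the Ricci bilinear form of the invariant metric `G`:
`Ric_G(x,y) = -(1/2) Σ G([x,e_i],[y,e_j])G^{ij} + (1/4) Σ G^{ip}G^{jq}G([e_i,e_j],x)G([e_p,e_q],y)`. -/
noncomputable def Ricm (c : Fin n → Fin n → Fin n → ℝ) (G : Matrix (Fin n) (Fin n) ℝ) :
    Matrix (Fin n) (Fin n) ℝ :=
  Matrix.of fun a b =>
    -(1/2) * (∑ i, ∑ j, G⁻¹ i j * gdot G (c a i) (c b j))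
    + (1/4) * (∑ i, ∑ j, ∑ p, ∑ q, G⁻¹ i p * G⁻¹ j q *
        (∑ k, c i j k * G k a) * (∑ l, c p q l * G l b))

/-- Scalar curvature `R_G = -(1/4)|[·,·]|²_G`. -/
noncomputable def scalR (c : Fin n → Fin n → Fin n → ℝ) (G : Matrix (Fin n) (Fin n) ℝ) : ℝ :=
  -(1/4) * (∑ i, ∑ j, ∑ p, ∑ q, G⁻¹ i p * G⁻¹ j q * gdot G (c i j) (c p q))

/-- Ricci endomorphism `Rc_G = G⁻¹ Ric_G`. -/
noncomputable def Rc (c : Fin n → Fin n → Fin n → ℝ) (G : Matrix (Fin n) (Fin n) ℝ) :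
    Matrix (Fin n) (Fin n) ℝ := G⁻¹ * Ricm c G

/-- `δ(A)(e_i,e_j) = A[e_i,e_j] - [A e_i, e_j] - [e_i, A e_j]` (components). -/
def deltaE (c : Fin n → Fin n → Fin n → ℝ) (A : Matrix (Fin n) (Fin n) ℝ) :
    Fin n → Fin n → Fin n → ℝ :=
  fun i j k => (∑ l, A k l * c i j l) - (∑ l, A l i * c l j k) - (∑ l, A l j * c i l k)

/-- The inner product on `Λ²𝔤*⊗𝔤` induced by `G` (full sum over ordered pairs). -/
noncomputable def tinner (G : Matrix (Fin n) (Fin n) ℝ) (μ ν : Fin n → Fin n → Fin n → ℝ) : ℝ :=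
  ∑ i, ∑ j, ∑ p, ∑ q, G⁻¹ i p * G⁻¹ j q * gdot G (μ i j) (ν p q)

/-- The (Hilbert–Schmidt) inner product of endomorphisms induced by `G`. -/
noncomputable def einner (G : Matrix (Fin n) (Fin n) ℝ) (A B : Matrix (Fin n) (Fin n) ℝ) : ℝ :=
  ∑ i, ∑ j, G⁻¹ i j * gdot G (fun k => A k i) (fun k => B k j)

/-- The inner product of bilinear forms induced by `G`. -/
noncomputable def binner (G : Matrix (Fin n) (Fin n) ℝ) (S T : Matrix (Fin n) (Fin n) ℝ) : ℝ :=
  ∑ i, ∑ j, ∑ p, ∑ q, G⁻¹ i p * G⁻¹ j q * S i j * T p q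

/-- `|Ric_G|²`. -/
noncomputable def ric2 (c : Fin n → Fin n → Fin n → ℝ) (G : Matrix (Fin n) (Fin n) ℝ) : ℝ :=
  binner G (Ricm c G) (Ricm c G)

/-- The functional `W₊(G,τ) = τ R_G + τ² |Ric_G|²`. -/
noncomputable def Wplus (c : Fin n → Fin n → Fin n → ℝ) (G : Matrix (Fin n) (Fin n) ℝ) (τ : ℝ) : ℝ :=
  τ * scalR c G + τ ^ 2 * ric2 c G

/-- Structure constants of the 3-dimensional Heisenberg Lie algebra: `[e₀,e₁] = e₂`, `e₂` central. -/
def heis : Fin 3 → Fin 3 → Fin 3 → ℝ := fun i j k =>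
  if i = 0 ∧ j = 1 ∧ k = 2 then 1 else if i = 1 ∧ j = 0 ∧ k = 2 then -1 else 0

end RFN


set_option maxHeartbeats 2000000

open RFN Matrix Finset

section Helpers
variable {n : ℕ}

lemma RFNsqrt_fact {α : Type*} [Fintype α] [DecidableEq α] {A : Matrix α α ℝ} (hA : A.PosDef) :
    ∃ P : Matrix α α ℝ, Pᵀ * P = A ∧ IsUnit P.det := by
  obtain ⟨P, hP⟩ : ∃ P : Matrix α α ℝ, A = star P * P := by
    open scoped MatrixOrder in exact CStarAlgebra.nonneg_iff_eq_star_mul_self.mp hA.posSemidef.nonneg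
  refine ⟨P, ?_, ?_⟩
  · rw [hP]
    rfl
  · have hd : P.det * P.det = A.det := by
      rw [hP, Matrix.det_mul, Matrix.star_eq_conjTranspose, Matrix.det_conjTranspose]
      simp
    have hA0 : A.det ≠ 0 := ne_of_gt hA.det_pos
    refine isUnit_iff_ne_zero.2 fun h0 => hA0 ?_
    rw [← hd, h0, mul_zero]

lemma RFNkron_posdef {α β : Type*} [Fintype α] [Fintype β] [DecidableEq α] [DecidableEq β]
    {A : Matrix α α ℝ} {B : Matrix β β ℝ} (hA : A.PosDef) (hB : B.PosDef) :
    (Matrix.kroneckerMap (· * ·) A B).PosDef := by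
  obtain ⟨P, hP, hPd⟩ := RFNsqrt_fact hA
  obtain ⟨Q, hQ, hQd⟩ := RFNsqrt_fact hB
  have hkt : (Matrix.kroneckerMap (· * ·) P Q)ᵀ = Matrix.kroneckerMap (· * ·) Pᵀ Qᵀ :=
    Matrix.kroneckerMap_transpose _ _ _
  have hfact : (Matrix.kroneckerMap (· * ·) P Q)ᵀ * (Matrix.kroneckerMap (· * ·) P Q)
      = Matrix.kroneckerMap (· * ·) A B := by
    rw [hkt, ← Matrix.mul_kronecker_mul, hP, hQ]
  have hCd : IsUnit (Matrix.kroneckerMap (· * ·) P Q).det := by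
    have h1 : (Matrix.kroneckerMap (· * ·) P Q) * (Matrix.kroneckerMap (· * ·) P⁻¹ Q⁻¹) = 1 := by
      rw [← Matrix.mul_kronecker_mul, Matrix.mul_nonsing_inv _ hPd, Matrix.mul_nonsing_inv _ hQd,
        Matrix.one_kronecker_one]
    exact Matrix.isUnit_det_of_right_inverse h1
  refine Matrix.PosDef.of_dotProduct_mulVec_pos ?_ ?_
  · rw [Matrix.IsHermitian, ← hfact]
    have hct : ∀ M : Matrix (α × β) (α × β) ℝ, Mᴴ = Mᵀ := fun M => rfl
    rw [hct, Matrix.transpose_mul, Matrix.transpose_transpose]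
  · intro x hx
    set C := Matrix.kroneckerMap (· * ·) P Q with hC
    have hy : C.mulVec x ≠ 0 := by
      intro h0
      apply hx
      have h2 : C⁻¹ * C = 1 := Matrix.nonsing_inv_mul _ hCd
      calc x = (C⁻¹ * C).mulVec x := by rw [h2, Matrix.one_mulVec]
        _ = C⁻¹.mulVec (C.mulVec x) := by rw [Matrix.mulVec_mulVec]
        _ = 0 := by rw [h0, Matrix.mulVec_zero]
    have key : dotProduct (star x) ((Matrix.kroneckerMap (· * ·) A B).mulVec x)
        = dotProduct (C.mulVec x) (C.mulVec x) := by
      rw [← hfact, ← Matrix.mulVec_mulVec, Matrix.dotProduct_mulVec, Matrix.vecMul_transpose]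
      simp
    rw [key]
    have h1 : ∀ i, 0 ≤ (C.mulVec x) i * (C.mulVec x) i := fun i => mul_self_nonneg _
    obtain ⟨i, hi⟩ : ∃ i, (C.mulVec x) i ≠ 0 := by
      by_contra hcon
      push_neg at hcon
      exact hy (funext hcon)
    rw [dotProduct]
    exact Finset.sum_pos' (fun i _ => h1 i)
      ⟨i, Finset.mem_univ i, by have := mul_self_pos.2 hi; simpa [sq] using this⟩

lemma RFNquad_pos {ι : Type*} [Fintype ι] {M : Matrix ι ι ℝ} (hM : M.PosDef)
    {v : ι → ℝ} (hv : v ≠ 0) : 0 < ∑ p, ∑ q, v p * M p q * v q := by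
  have h := hM.dotProduct_mulVec_pos hv
  simp only [star_trivial, dotProduct, Matrix.mulVec] at h
  calc (0:ℝ) < ∑ p, v p * ∑ q, M p q * v q := h
    _ = ∑ p, ∑ q, v p * M p q * v q := by
        refine Finset.sum_congr rfl fun p _ => ?_
        rw [Finset.mul_sum]
        exact Finset.sum_congr rfl fun q _ => by ring

lemma RFNbinner_pos {G : Matrix (Fin n) (Fin n) ℝ} (hG : G.PosDef)
    {S : Matrix (Fin n) (Fin n) ℝ} (hS : S ≠ 0) : 0 < binner G S S := by
  have hK := RFNkron_posdef hG.inv hG.inv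
  have hv : (fun x : Fin n × Fin n => S x.1 x.2) ≠ 0 := by
    intro h0
    apply hS
    ext i j
    exact congrFun h0 (i, j)
  have h := RFNquad_pos hK hv
  calc (0:ℝ) < _ := h
    _ = binner G S S := by
      simp only [binner]
      rw [Fintype.sum_prod_type]
      refine Finset.sum_congr rfl fun i _ => ?_
      refine Finset.sum_congr rfl fun j _ => ?_
      rw [Fintype.sum_prod_type]
      refine Finset.sum_congr rfl fun p _ => ?_
      refine Finset.sum_congr rfl fun q _ => ?_
      simp only [Matrix.kroneckerMap_apply]
      ring

lemma RFNtinner_pos {G : Matrix (Fin n) (Fin n) ℝ} (hG : G.PosDef)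
    {μ : Fin n → Fin n → Fin n → ℝ} (hμ : μ ≠ 0) : 0 < tinner G μ μ := by
  have hK := RFNkron_posdef (RFNkron_posdef hG.inv hG.inv) hG
  have hv : (fun x : (Fin n × Fin n) × Fin n => μ x.1.1 x.1.2 x.2) ≠ 0 := by
    intro h0
    apply hμ
    ext i j k
    exact congrFun h0 ((i, j), k)
  have h := RFNquad_pos hK hv
  calc (0:ℝ) < _ := h
    _ = tinner G μ μ := by
      simp only [tinner, gdot]
      simp only [Fintype.sum_prod_type]
      refine Finset.sum_congr rfl fun i _ => ?_
      refine Finset.sum_congr rfl fun j _ => ?_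
      rw [Finset.sum_comm]
      refine Finset.sum_congr rfl fun p _ => ?_
      rw [Finset.sum_comm]
      refine Finset.sum_congr rfl fun q _ => ?_
      simp only [Finset.mul_sum]
      refine Finset.sum_congr rfl fun k _ => ?_
      refine Finset.sum_congr rfl fun m _ => ?_
      simp only [Matrix.kroneckerMap_apply]
      ring

lemma RFNgsym {G : Matrix (Fin n) (Fin n) ℝ} (hG : G.PosDef) : ∀ i j, G i j = G j i := by
  intro i j
  have h := hG.1
  have h2 := congrFun (congrFun h j) i
  simpa [Matrix.conjTranspose_apply] using h2

lemma RFNcollapse {G : Matrix (Fin n) (Fin n) ℝ} (hG : G.PosDef) :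
    ∀ w j, (∑ i, G w i * G⁻¹ i j) = if w = j then 1 else 0 := by
  intro w j
  have h : G * G⁻¹ = 1 := Matrix.mul_nonsing_inv G (isUnit_iff_ne_zero.2 (ne_of_gt hG.det_pos))
  have h2 := congrFun (congrFun h w) j
  simpa [Matrix.mul_apply, Matrix.one_apply] using h2

/-- auxiliary endomorphism pairing -/
noncomputable def TTs (cs : Fin n → Fin n → Fin n → ℝ) (G : Matrix (Fin n) (Fin n) ℝ)
    (A : Matrix (Fin n) (Fin n) ℝ) : ℝ :=
  ∑ l, ∑ i, ∑ j, G⁻¹ i j * Ricm cs G l i * A l j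


lemma RFNmain_id (cs : Fin n → Fin n → Fin n → ℝ) {G : Matrix (Fin n) (Fin n) ℝ} (hG : G.PosDef)
    (hanti : ∀ i j k, cs i j k = - cs j i k) (A : Matrix (Fin n) (Fin n) ℝ) :
    tinner G (deltaE cs A) cs = 4 * TTs cs G A := by
  have hh := RFNgsym hG.inv
  have hgs := RFNgsym hG
  have hcol := RFNcollapse hG
  have hL : tinner G (deltaE cs A) cs =
      (∑ i, ∑ j, ∑ p, ∑ q, ∑ k, ∑ m, ∑ u,
        G⁻¹ i p * G⁻¹ j q * (A k u * cs i j u * (G k m * cs p q m)))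
    - (∑ i, ∑ j, ∑ p, ∑ q, ∑ k, ∑ m, ∑ u,
        G⁻¹ i p * G⁻¹ j q * (A u i * cs u j k * (G k m * cs p q m)))
    - (∑ i, ∑ j, ∑ p, ∑ q, ∑ k, ∑ m, ∑ u,
        G⁻¹ i p * G⁻¹ j q * (A u j * cs i u k * (G k m * cs p q m))) := by
    simp only [tinner, deltaE, gdot, sub_mul, Finset.sum_sub_distrib, Finset.mul_sum,
      Finset.sum_mul, mul_sub]
    refine congrArg₂ (· - · : ℝ → ℝ → ℝ) (congrArg₂ (· - · : ℝ → ℝ → ℝ) ?_ ?_) ?_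
    · refine Finset.sum_congr rfl fun _ _ => ?_
      refine Finset.sum_congr rfl fun _ _ => ?_
      refine Finset.sum_congr rfl fun _ _ => ?_
      refine Finset.sum_congr rfl fun _ _ => ?_
      refine Finset.sum_congr rfl fun _ _ => ?_
      refine Finset.sum_congr rfl fun _ _ => ?_
      refine Finset.sum_congr rfl fun _ _ => ?_
      ring
    · refine Finset.sum_congr rfl fun _ _ => ?_
      refine Finset.sum_congr rfl fun _ _ => ?_
      refine Finset.sum_congr rfl fun _ _ => ?_
      refine Finset.sum_congr rfl fun _ _ => ?_
      refine Finset.sum_congr rfl fun _ _ => ?_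
      refine Finset.sum_congr rfl fun _ _ => ?_
      refine Finset.sum_congr rfl fun _ _ => ?_
      ring
    · refine Finset.sum_congr rfl fun _ _ => ?_
      refine Finset.sum_congr rfl fun _ _ => ?_
      refine Finset.sum_congr rfl fun _ _ => ?_
      refine Finset.sum_congr rfl fun _ _ => ?_
      refine Finset.sum_congr rfl fun _ _ => ?_
      refine Finset.sum_congr rfl fun _ _ => ?_
      refine Finset.sum_congr rfl fun _ _ => ?_
      ring
  have hR : TTs cs G A =
      -((1/2) * (∑ l, ∑ i, ∑ j, ∑ p, ∑ q, ∑ k, ∑ w,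
        G⁻¹ i j * (G⁻¹ p q * (cs l p k * G k w * cs i q w)) * A l j))
    + (1/4) * (∑ l, ∑ i, ∑ j, ∑ p, ∑ q, ∑ r, ∑ s, ∑ w, ∑ k,
        G⁻¹ i j * (G⁻¹ p r * G⁻¹ q s * (cs p q k * G k l) * (cs r s w * G w i)) * A l j) := by
    simp only [TTs, Ricm, Matrix.of_apply, gdot, add_mul, mul_add, Finset.sum_add_distrib,
      Finset.mul_sum, Finset.sum_mul, neg_mul, mul_neg, Finset.sum_neg_distrib]
    refine congrArg₂ (· + · : ℝ → ℝ → ℝ) (congrArg Neg.neg ?_) ?_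
    · refine Finset.sum_congr rfl fun _ _ => ?_
      refine Finset.sum_congr rfl fun _ _ => ?_
      refine Finset.sum_congr rfl fun _ _ => ?_
      refine Finset.sum_congr rfl fun _ _ => ?_
      refine Finset.sum_congr rfl fun _ _ => ?_
      refine Finset.sum_congr rfl fun _ _ => ?_
      refine Finset.sum_congr rfl fun _ _ => ?_
      ring
    · refine Finset.sum_congr rfl fun _ _ => ?_
      refine Finset.sum_congr rfl fun _ _ => ?_
      refine Finset.sum_congr rfl fun _ _ => ?_
      refine Finset.sum_congr rfl fun _ _ => ?_
      refine Finset.sum_congr rfl fun _ _ => ?_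
      refine Finset.sum_congr rfl fun _ _ => ?_
      refine Finset.sum_congr rfl fun _ _ => ?_
      refine Finset.sum_congr rfl fun _ _ => ?_
      refine Finset.sum_congr rfl fun _ _ => ?_
      ring
  have e1 : (∑ i, ∑ j, ∑ p, ∑ q, ∑ k, ∑ m, ∑ u,
        G⁻¹ i p * G⁻¹ j q * (A u i * cs u j k * (G k m * cs p q m)))
      = (∑ l, ∑ i, ∑ j, ∑ p, ∑ q, ∑ k, ∑ w,
        G⁻¹ i j * (G⁻¹ p q * (cs l p k * G k w * cs i q w)) * A l j) := by
    conv_lhs => rw [← Fintype.sum_prod_type']; rw [← Fintype.sum_prod_type']; rw [← Fintype.sum_prod_type']; rw [← Fintype.sum_prod_type']; rw [← Fintype.sum_prod_type']; rw [← Fintype.sum_prod_type']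
    conv_rhs => rw [← Fintype.sum_prod_type']; rw [← Fintype.sum_prod_type']; rw [← Fintype.sum_prod_type']; rw [← Fintype.sum_prod_type']; rw [← Fintype.sum_prod_type']; rw [← Fintype.sum_prod_type']
    refine Fintype.sum_equiv ⟨fun x => match x with | ⟨⟨⟨⟨⟨⟨a1, a2⟩, a3⟩, a4⟩, a5⟩, a6⟩, a7⟩ => ((((((a7, a3), a1), a2), a4), a5), a6), fun x => match x with | ⟨⟨⟨⟨⟨⟨a1, a2⟩, a3⟩, a4⟩, a5⟩, a6⟩, a7⟩ => ((((((a3, a4), a2), a5), a6), a7), a1), by rintro ⟨⟨⟨⟨⟨⟨a1, a2⟩, a3⟩, a4⟩, a5⟩, a6⟩, a7⟩; rfl, by rintro ⟨⟨⟨⟨⟨⟨a1, a2⟩, a3⟩, a4⟩, a5⟩, a6⟩, a7⟩; rfl⟩ _ _ ?_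
    rintro ⟨⟨⟨⟨⟨⟨a1, a2⟩, a3⟩, a4⟩, a5⟩, a6⟩, a7⟩
    simp only [Equiv.coe_fn_mk]
    rw [hh a3 a1]
    ring
  have e2 : (∑ i, ∑ j, ∑ p, ∑ q, ∑ k, ∑ m, ∑ u,
        G⁻¹ i p * G⁻¹ j q * (A u j * cs i u k * (G k m * cs p q m)))
      = (∑ l, ∑ i, ∑ j, ∑ p, ∑ q, ∑ k, ∑ w,
        G⁻¹ i j * (G⁻¹ p q * (cs l p k * G k w * cs i q w)) * A l j) := by
    conv_lhs => rw [← Fintype.sum_prod_type']; rw [← Fintype.sum_prod_type']; rw [← Fintype.sum_prod_type']; rw [← Fintype.sum_prod_type']; rw [← Fintype.sum_prod_type']; rw [← Fintype.sum_prod_type']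
    conv_rhs => rw [← Fintype.sum_prod_type']; rw [← Fintype.sum_prod_type']; rw [← Fintype.sum_prod_type']; rw [← Fintype.sum_prod_type']; rw [← Fintype.sum_prod_type']; rw [← Fintype.sum_prod_type']
    refine Fintype.sum_equiv ⟨fun x => match x with | ⟨⟨⟨⟨⟨⟨a1, a2⟩, a3⟩, a4⟩, a5⟩, a6⟩, a7⟩ => ((((((a7, a4), a2), a1), a3), a5), a6), fun x => match x with | ⟨⟨⟨⟨⟨⟨a1, a2⟩, a3⟩, a4⟩, a5⟩, a6⟩, a7⟩ => ((((((a4, a3), a5), a2), a6), a7), a1), by rintro ⟨⟨⟨⟨⟨⟨a1, a2⟩, a3⟩, a4⟩, a5⟩, a6⟩, a7⟩; rfl, by rintro ⟨⟨⟨⟨⟨⟨a1, a2⟩, a3⟩, a4⟩, a5⟩, a6⟩, a7⟩; rfl⟩ _ _ ?_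
    rintro ⟨⟨⟨⟨⟨⟨a1, a2⟩, a3⟩, a4⟩, a5⟩, a6⟩, a7⟩
    simp only [Equiv.coe_fn_mk]
    rw [hh a4 a2]
    rw [hanti a7 a1 a5]
    rw [hanti a4 a3 a6]
    ring
  have e3a : (∑ l, ∑ i, ∑ j, ∑ p, ∑ q, ∑ r, ∑ s, ∑ w, ∑ k,
        G⁻¹ i j * (G⁻¹ p r * G⁻¹ q s * (cs p q k * G k l) * (cs r s w * G w i)) * A l j)
      = (∑ l, ∑ j, ∑ p, ∑ q, ∑ r, ∑ s, ∑ k, ∑ w, ∑ i,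
        (A l j * (G⁻¹ p r * G⁻¹ q s * (cs p q k * G k l))) * (cs r s w * (G w i * G⁻¹ i j))) := by
    conv_lhs => rw [← Fintype.sum_prod_type']; rw [← Fintype.sum_prod_type']; rw [← Fintype.sum_prod_type']; rw [← Fintype.sum_prod_type']; rw [← Fintype.sum_prod_type']; rw [← Fintype.sum_prod_type']; rw [← Fintype.sum_prod_type']; rw [← Fintype.sum_prod_type']
    conv_rhs => rw [← Fintype.sum_prod_type']; rw [← Fintype.sum_prod_type']; rw [← Fintype.sum_prod_type']; rw [← Fintype.sum_prod_type']; rw [← Fintype.sum_prod_type']; rw [← Fintype.sum_prod_type']; rw [← Fintype.sum_prod_type']; rw [← Fintype.sum_prod_type']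
    refine Fintype.sum_equiv ⟨fun x => match x with | ⟨⟨⟨⟨⟨⟨⟨⟨a1, a2⟩, a3⟩, a4⟩, a5⟩, a6⟩, a7⟩, a8⟩, a9⟩ => ((((((((a1, a3), a4), a5), a6), a7), a9), a8), a2), fun x => match x with | ⟨⟨⟨⟨⟨⟨⟨⟨a1, a2⟩, a3⟩, a4⟩, a5⟩, a6⟩, a7⟩, a8⟩, a9⟩ => ((((((((a1, a9), a2), a3), a4), a5), a6), a8), a7), by rintro ⟨⟨⟨⟨⟨⟨⟨⟨a1, a2⟩, a3⟩, a4⟩, a5⟩, a6⟩, a7⟩, a8⟩, a9⟩; rfl, by rintro ⟨⟨⟨⟨⟨⟨⟨⟨a1, a2⟩, a3⟩, a4⟩, a5⟩, a6⟩, a7⟩, a8⟩, a9⟩; rfl⟩ _ _ ?_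
    rintro ⟨⟨⟨⟨⟨⟨⟨⟨a1, a2⟩, a3⟩, a4⟩, a5⟩, a6⟩, a7⟩, a8⟩, a9⟩
    simp only [Equiv.coe_fn_mk]
    ring
  have e3b : (∑ l, ∑ j, ∑ p, ∑ q, ∑ r, ∑ s, ∑ k, ∑ w, ∑ i,
        (A l j * (G⁻¹ p r * G⁻¹ q s * (cs p q k * G k l))) * (cs r s w * (G w i * G⁻¹ i j)))
      = (∑ l, ∑ j, ∑ p, ∑ q, ∑ r, ∑ s, ∑ k,
        (A l j * (G⁻¹ p r * G⁻¹ q s * (cs p q k * G k l))) * cs r s j) := by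
    refine Finset.sum_congr rfl fun l _ => ?_
    refine Finset.sum_congr rfl fun j _ => ?_
    refine Finset.sum_congr rfl fun p _ => ?_
    refine Finset.sum_congr rfl fun q _ => ?_
    refine Finset.sum_congr rfl fun r _ => ?_
    refine Finset.sum_congr rfl fun s _ => ?_
    refine Finset.sum_congr rfl fun k _ => ?_
    calc (∑ w, ∑ i, (A l j * (G⁻¹ p r * G⁻¹ q s * (cs p q k * G k l))) * (cs r s w * (G w i * G⁻¹ i j)))
        = ∑ w, (A l j * (G⁻¹ p r * G⁻¹ q s * (cs p q k * G k l))) * cs r s w * (∑ i, G w i * G⁻¹ i j) := by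
          refine Finset.sum_congr rfl fun w _ => ?_
          rw [Finset.mul_sum]
          refine Finset.sum_congr rfl fun i _ => ?_
          ring
      _ = ∑ w, (A l j * (G⁻¹ p r * G⁻¹ q s * (cs p q k * G k l))) * cs r s w * (if w = j then 1 else 0) := by
          refine Finset.sum_congr rfl fun w _ => ?_
          rw [hcol w j]
      _ = (A l j * (G⁻¹ p r * G⁻¹ q s * (cs p q k * G k l))) * cs r s j := by
          simp only [mul_ite, mul_one, mul_zero]
          rw [Finset.sum_ite_eq' Finset.univ j]
          simp
  have e4 : (∑ i, ∑ j, ∑ p, ∑ q, ∑ k, ∑ m, ∑ u,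
        G⁻¹ i p * G⁻¹ j q * (A k u * cs i j u * (G k m * cs p q m)))
      = (∑ l, ∑ j, ∑ p, ∑ q, ∑ r, ∑ s, ∑ k,
        (A l j * (G⁻¹ p r * G⁻¹ q s * (cs p q k * G k l))) * cs r s j) := by
    conv_lhs => rw [← Fintype.sum_prod_type']; rw [← Fintype.sum_prod_type']; rw [← Fintype.sum_prod_type']; rw [← Fintype.sum_prod_type']; rw [← Fintype.sum_prod_type']; rw [← Fintype.sum_prod_type']
    conv_rhs => rw [← Fintype.sum_prod_type']; rw [← Fintype.sum_prod_type']; rw [← Fintype.sum_prod_type']; rw [← Fintype.sum_prod_type']; rw [← Fintype.sum_prod_type']; rw [← Fintype.sum_prod_type']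
    refine Fintype.sum_equiv ⟨fun x => match x with | ⟨⟨⟨⟨⟨⟨a1, a2⟩, a3⟩, a4⟩, a5⟩, a6⟩, a7⟩ => ((((((a5, a7), a3), a4), a1), a2), a6), fun x => match x with | ⟨⟨⟨⟨⟨⟨a1, a2⟩, a3⟩, a4⟩, a5⟩, a6⟩, a7⟩ => ((((((a5, a6), a3), a4), a1), a7), a2), by rintro ⟨⟨⟨⟨⟨⟨a1, a2⟩, a3⟩, a4⟩, a5⟩, a6⟩, a7⟩; rfl, by rintro ⟨⟨⟨⟨⟨⟨a1, a2⟩, a3⟩, a4⟩, a5⟩, a6⟩, a7⟩; rfl⟩ _ _ ?_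
    rintro ⟨⟨⟨⟨⟨⟨a1, a2⟩, a3⟩, a4⟩, a5⟩, a6⟩, a7⟩
    simp only [Equiv.coe_fn_mk]
    rw [hh a3 a1]
    rw [hh a4 a2]
    rw [hgs a6 a5]
    ring
  rw [hL, e1, e2, e4, hR, e3a, e3b]
  ring



lemma RFNTTs_one (cs : Fin n → Fin n → Fin n → ℝ) {G : Matrix (Fin n) (Fin n) ℝ} (hG : G.PosDef) :
    TTs cs G 1 = scalR cs G := by
  have hh := RFNgsym hG.inv
  have hgs := RFNgsym hG
  have hcol := RFNcollapse hG
  have step1 : TTs cs G 1 = ∑ i, ∑ j, G⁻¹ i j * Ricm cs G j i := by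
    simp only [TTs, Matrix.one_apply, mul_ite, mul_one, mul_zero]
    rw [Finset.sum_comm]
    refine Finset.sum_congr rfl fun i _ => ?_
    rw [Finset.sum_comm]
    refine Finset.sum_congr rfl fun j _ => ?_
    rw [Finset.sum_ite_eq' Finset.univ j]
    simp
  have step2 : (∑ i, ∑ j, G⁻¹ i j * Ricm cs G j i) =
      -((1/2) * (∑ i, ∑ j, ∑ p, ∑ q, ∑ k, ∑ w,
        G⁻¹ i j * (G⁻¹ p q * (cs j p k * G k w * cs i q w))))
    + (1/4) * (∑ i, ∑ j, ∑ p, ∑ q, ∑ r, ∑ s, ∑ w, ∑ k,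
        G⁻¹ i j * (G⁻¹ p r * G⁻¹ q s * (cs p q k * G k j) * (cs r s w * G w i))) := by
    simp only [Ricm, Matrix.of_apply, gdot, add_mul, mul_add, Finset.sum_add_distrib,
      Finset.mul_sum, Finset.sum_mul, neg_mul, mul_neg, Finset.sum_neg_distrib]
    refine congrArg₂ (· + · : ℝ → ℝ → ℝ) (congrArg Neg.neg ?_) ?_
    · refine Finset.sum_congr rfl fun _ _ => ?_
      refine Finset.sum_congr rfl fun _ _ => ?_
      refine Finset.sum_congr rfl fun _ _ => ?_
      refine Finset.sum_congr rfl fun _ _ => ?_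
      refine Finset.sum_congr rfl fun _ _ => ?_
      refine Finset.sum_congr rfl fun _ _ => ?_
      ring
    · refine Finset.sum_congr rfl fun _ _ => ?_
      refine Finset.sum_congr rfl fun _ _ => ?_
      refine Finset.sum_congr rfl fun _ _ => ?_
      refine Finset.sum_congr rfl fun _ _ => ?_
      refine Finset.sum_congr rfl fun _ _ => ?_
      refine Finset.sum_congr rfl fun _ _ => ?_
      refine Finset.sum_congr rfl fun _ _ => ?_
      refine Finset.sum_congr rfl fun _ _ => ?_
      ring
  have eU1 : (∑ i, ∑ j, ∑ p, ∑ q, ∑ k, ∑ w,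
        G⁻¹ i j * (G⁻¹ p q * (cs j p k * G k w * cs i q w)))
      = (∑ i, ∑ j, ∑ p, ∑ q, ∑ k, ∑ w,
        G⁻¹ i p * G⁻¹ j q * (cs i j k * G k w * cs p q w)) := by
    conv_lhs => rw [← Fintype.sum_prod_type']; rw [← Fintype.sum_prod_type']; rw [← Fintype.sum_prod_type']; rw [← Fintype.sum_prod_type']; rw [← Fintype.sum_prod_type']
    conv_rhs => rw [← Fintype.sum_prod_type']; rw [← Fintype.sum_prod_type']; rw [← Fintype.sum_prod_type']; rw [← Fintype.sum_prod_type']; rw [← Fintype.sum_prod_type']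
    refine Fintype.sum_equiv ⟨fun x => match x with | ⟨⟨⟨⟨⟨a1, a2⟩, a3⟩, a4⟩, a5⟩, a6⟩ => (((((a2, a3), a1), a4), a5), a6), fun x => match x with | ⟨⟨⟨⟨⟨a1, a2⟩, a3⟩, a4⟩, a5⟩, a6⟩ => (((((a3, a1), a2), a4), a5), a6), by rintro ⟨⟨⟨⟨⟨a1, a2⟩, a3⟩, a4⟩, a5⟩, a6⟩; rfl, by rintro ⟨⟨⟨⟨⟨a1, a2⟩, a3⟩, a4⟩, a5⟩, a6⟩; rfl⟩ _ _ ?_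
    rintro ⟨⟨⟨⟨⟨a1, a2⟩, a3⟩, a4⟩, a5⟩, a6⟩
    simp only [Equiv.coe_fn_mk]
    rw [hh a2 a1]
    ring
  have eU2a : (∑ i, ∑ j, ∑ p, ∑ q, ∑ r, ∑ s, ∑ w, ∑ k,
        G⁻¹ i j * (G⁻¹ p r * G⁻¹ q s * (cs p q k * G k j) * (cs r s w * G w i)))
      = (∑ p, ∑ q, ∑ r, ∑ s, ∑ k, ∑ w, ∑ i, ∑ j,
        (G⁻¹ p r * G⁻¹ q s * (cs p q k * cs r s w)) * (G w i * (G k j * G⁻¹ j i))) := by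
    conv_lhs => rw [← Fintype.sum_prod_type']; rw [← Fintype.sum_prod_type']; rw [← Fintype.sum_prod_type']; rw [← Fintype.sum_prod_type']; rw [← Fintype.sum_prod_type']; rw [← Fintype.sum_prod_type']; rw [← Fintype.sum_prod_type']
    conv_rhs => rw [← Fintype.sum_prod_type']; rw [← Fintype.sum_prod_type']; rw [← Fintype.sum_prod_type']; rw [← Fintype.sum_prod_type']; rw [← Fintype.sum_prod_type']; rw [← Fintype.sum_prod_type']; rw [← Fintype.sum_prod_type']
    refine Fintype.sum_equiv ⟨fun x => match x with | ⟨⟨⟨⟨⟨⟨⟨a1, a2⟩, a3⟩, a4⟩, a5⟩, a6⟩, a7⟩, a8⟩ => (((((((a3, a4), a5), a6), a8), a7), a1), a2), fun x => match x with | ⟨⟨⟨⟨⟨⟨⟨a1, a2⟩, a3⟩, a4⟩, a5⟩, a6⟩, a7⟩, a8⟩ => (((((((a7, a8), a1), a2), a3), a4), a6), a5), by rintro ⟨⟨⟨⟨⟨⟨⟨a1, a2⟩, a3⟩, a4⟩, a5⟩, a6⟩, a7⟩, a8⟩; rfl, by rintro ⟨⟨⟨⟨⟨⟨⟨a1, a2⟩,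 a3⟩, a4⟩, a5⟩, a6⟩, a7⟩, a8⟩; rfl⟩ _ _ ?_
    rintro ⟨⟨⟨⟨⟨⟨⟨a1, a2⟩, a3⟩, a4⟩, a5⟩, a6⟩, a7⟩, a8⟩
    simp only [Equiv.coe_fn_mk]
    rw [hh a2 a1]
    ring
  have eU2b : (∑ p, ∑ q, ∑ r, ∑ s, ∑ k, ∑ w, ∑ i, ∑ j,
        (G⁻¹ p r * G⁻¹ q s * (cs p q k * cs r s w)) * (G w i * (G k j * G⁻¹ j i)))
      = (∑ p, ∑ q, ∑ r, ∑ s, ∑ k, ∑ w,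
        (G⁻¹ p r * G⁻¹ q s * (cs p q k * cs r s w)) * G w k) := by
    refine Finset.sum_congr rfl fun p _ => ?_
    refine Finset.sum_congr rfl fun q _ => ?_
    refine Finset.sum_congr rfl fun r _ => ?_
    refine Finset.sum_congr rfl fun s _ => ?_
    refine Finset.sum_congr rfl fun k _ => ?_
    refine Finset.sum_congr rfl fun w _ => ?_
    calc (∑ i, ∑ j, (G⁻¹ p r * G⁻¹ q s * (cs p q k * cs r s w)) * (G w i * (G k j * G⁻¹ j i)))
        = ∑ i, (G⁻¹ p r * G⁻¹ q s * (cs p q k * cs r s w)) * G w i * (∑ j, G k j * G⁻¹ j i) := by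
          refine Finset.sum_congr rfl fun i _ => ?_
          rw [Finset.mul_sum]
          refine Finset.sum_congr rfl fun j _ => ?_
          ring
      _ = ∑ i, (G⁻¹ p r * G⁻¹ q s * (cs p q k * cs r s w)) * G w i * (if k = i then 1 else 0) := by
          refine Finset.sum_congr rfl fun i _ => ?_
          rw [hcol k i]
      _ = (G⁻¹ p r * G⁻¹ q s * (cs p q k * cs r s w)) * G w k := by
          simp only [mul_ite, mul_one, mul_zero]
          rw [Finset.sum_ite_eq Finset.univ k]
          simp
  have eU2c : (∑ p, ∑ q, ∑ r, ∑ s, ∑ k, ∑ w,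
        (G⁻¹ p r * G⁻¹ q s * (cs p q k * cs r s w)) * G w k)
      = (∑ i, ∑ j, ∑ p, ∑ q, ∑ k, ∑ w,
        G⁻¹ i p * G⁻¹ j q * (cs i j k * G k w * cs p q w)) := by
    refine Finset.sum_congr rfl fun p _ => ?_
    refine Finset.sum_congr rfl fun q _ => ?_
    refine Finset.sum_congr rfl fun r _ => ?_
    refine Finset.sum_congr rfl fun s _ => ?_
    refine Finset.sum_congr rfl fun k _ => ?_
    refine Finset.sum_congr rfl fun w _ => ?_
    rw [hgs w k]
    ring
  have hscal : scalR cs G = -(1/4) * (∑ i, ∑ j, ∑ p, ∑ q, ∑ k, ∑ w,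
        G⁻¹ i p * G⁻¹ j q * (cs i j k * G k w * cs p q w)) := by
    simp only [scalR, gdot, Finset.mul_sum]
  rw [step1, step2, eU1, eU2a, eU2b, eU2c, hscal]
  ring



lemma RFNTTs_Rc (cs : Fin n → Fin n → Fin n → ℝ) (G : Matrix (Fin n) (Fin n) ℝ) :
    TTs cs G (Rc cs G) = ric2 cs G := by
  simp only [TTs, Rc, Matrix.mul_apply, ric2, binner, Finset.mul_sum]
  refine Finset.sum_congr rfl fun l _ => ?_
  refine Finset.sum_congr rfl fun i _ => ?_
  rw [Finset.sum_comm]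
  refine Finset.sum_congr rfl fun a _ => ?_
  refine Finset.sum_congr rfl fun j _ => ?_
  ring


end Helpers

theorem stmt14 {n : ℕ} (cs : Fin n → Fin n → Fin n → ℝ) (hcs : IsLieSC cs)
    (hnil : IsNilpotentSC cs) (hna : ∃ i j k, cs i j k ≠ 0)
    (G : Matrix (Fin n) (Fin n) ℝ) (hG : G.PosDef) (c : ℝ)
    (hsol : deltaE cs (Rc cs G + (c/2) • (1 : Matrix (Fin n) (Fin n) ℝ)) = 0) :
    c = -2 * ric2 cs G / scalR cs G ∧ 0 < c := by
  have hanti : ∀ i j k, cs i j k = - cs j i k := hcs.1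
  have hzero : tinner G (deltaE cs (Rc cs G + (c/2) • (1 : Matrix (Fin n) (Fin n) ℝ))) cs = 0 := by
    rw [hsol]
    simp [tinner, gdot]
  have hmain := RFNmain_id cs hG hanti (Rc cs G + (c/2) • (1 : Matrix (Fin n) (Fin n) ℝ))
  have hsplit : TTs cs G (Rc cs G + (c/2) • (1 : Matrix (Fin n) (Fin n) ℝ))
      = TTs cs G (Rc cs G) + (c/2) * TTs cs G 1 := by
    simp only [TTs, Matrix.add_apply, Matrix.smul_apply, smul_eq_mul, mul_add,
      Finset.sum_add_distrib, Finset.mul_sum]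
    refine congrArg₂ (· + · : ℝ → ℝ → ℝ) rfl ?_
    refine Finset.sum_congr rfl fun _ _ => ?_
    refine Finset.sum_congr rfl fun _ _ => ?_
    refine Finset.sum_congr rfl fun _ _ => ?_
    ring
  have key : ric2 cs G + (c/2) * scalR cs G = 0 := by
    have h4 : (0:ℝ) = 4 * (ric2 cs G + (c/2) * scalR cs G) := by
      rw [← RFNTTs_Rc cs G, ← RFNTTs_one cs hG, ← hsplit, ← hmain, hzero]
    linarith
  have hcs0 : cs ≠ 0 := by
    obtain ⟨i, j, k, hij⟩ := hna
    intro h0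
    apply hij
    rw [h0]
    rfl
  have htp : 0 < tinner G cs cs := RFNtinner_pos hG hcs0
  have hscal : scalR cs G < 0 := by
    have : scalR cs G = -(1/4) * tinner G cs cs := rfl
    rw [this]
    linarith
  have hricne : Ricm cs G ≠ 0 := by
    intro h0
    have h1 : TTs cs G 1 = 0 := by
      simp [TTs, h0]
    rw [RFNTTs_one cs hG] at h1
    exact absurd h1 (ne_of_lt hscal)
  have hr2 : 0 < ric2 cs G := RFNbinner_pos hG hricne
  have hceq : c = -2 * ric2 cs G / scalR cs G := by
    rw [eq_div_iff (ne_of_lt hscal)]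
    linear_combination (2 : ℝ) * key
  refine ⟨hceq, ?_⟩
  rw [hceq]
  exact div_pos_of_neg_of_neg (by linarith) hscal
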